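/- Let L be a complete enriched Lie algebra with defining ideals I_α and quotient maps ρ_α : L → L/I_α. If S and T are closed subspaces of L, then S + T is closed, i.e. the closure of S+T in L equals S+T. -/

import Mathlib

section EnrichedPre

variable {L : Type*} [LieRing L] [LieAlgebra ℚ L]

/-- `lcsIn A n` is the span of iterated Lie brackets of length `n+1` with entries in `A`
(so `lcsIn ⊤ (k-1)` is the `k`-th term `L^k` of the lower central series). -/
def lcsIn (A : Submodule ℚ L) : ℕ → Submodule ℚ L
  | 0 => A
  | n + 1 => Submodule.span ℚ {z : L | ∃ x ∈ A, ∃ y ∈ lcsIn A n, ⁅x, y⁆ = z}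

/-- The closure of a subspace `S` in an enriched Lie algebra `(L, {I α})`:
the set of limits of coherent families of elements of `S`, i.e. of those `x`
whose image in each `L ⧸ I α` lies in the image of `S`. -/
def encl {ι : Type*} (I : ι → LieIdeal ℚ L) (S : Submodule ℚ L) : Submodule ℚ L where
  carrier := {x : L | ∀ α, ∃ s ∈ S, x - s ∈ (I α : Submodule ℚ L)}
  add_mem' := by
    intro a b ha hb α
    obtain ⟨s, hs, h1⟩ := ha α
    obtain ⟨t, ht, h2⟩ := hb α
    exact ⟨s + t, S.add_mem hs ht, by
      simpa [add_sub_add_comm] using Submodule.add_mem _ h1 h2⟩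
  zero_mem' := fun α => ⟨0, S.zero_mem, by simp⟩
  smul_mem' := by
    intro c a ha α
    obtain ⟨s, hs, h1⟩ := ha α
    exact ⟨c • s, S.smul_mem c hs, by
      simpa [smul_sub] using Submodule.smul_mem _ c h1⟩

/-- `(L, {I α})` is an enriched Lie algebra: a directed family of ideals with
finite-dimensional nilpotent quotients and trivial intersection. -/
def IsEnriched {ι : Type*} (I : ι → LieIdeal ℚ L) : Prop :=
  (∀ α β, ∃ γ, I γ ≤ I α ⊓ I β) ∧
  (∀ α, FiniteDimensional ℚ (L ⧸ I α)) ∧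
  (∀ α, LieRing.IsNilpotent (L ⧸ I α)) ∧
  (⨅ α, I α) = ⊥

/-- Completeness of `(L, {I α})`: every coherent family in `lim_α L/I α`
(presented by compatible representatives) has a limit in `L`. -/
def IsCompleteWrt {ι : Type*} (I : ι → LieIdeal ℚ L) : Prop :=
  ∀ y : ι → L, (∀ α β, I β ≤ I α → y β - y α ∈ (I α : Submodule ℚ L)) →
    ∃ x : L, ∀ α, x - y α ∈ (I α : Submodule ℚ L)

end EnrichedPre


section Aux
variable {L : Type*} [LieRing L] [LieAlgebra ℚ L]

def IsCosetGe (J : Submodule ℚ L) (F : Set L) : Prop :=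
  ∃ (v : L) (W : Submodule ℚ L), J ≤ W ∧ F = {z | z - v ∈ W}

def thick (J : Submodule ℚ L) (F : Set L) : Set L := {z | ∃ w ∈ F, z - w ∈ J}

lemma IsCosetGe.nonempty {J : Submodule ℚ L} {F : Set L} (h : IsCosetGe J F) :
    F.Nonempty := by
  obtain ⟨v, W, -, rfl⟩ := h; exact ⟨v, by simp⟩

lemma subset_thick {J : Submodule ℚ L} {F : Set L} : F ⊆ thick J F :=
  fun z hz => ⟨z, hz, by simp⟩

lemma thick_mono {J J' : Submodule ℚ L} {F F' : Set L} (hJ : J ≤ J') (hF : F ⊆ F') :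
    thick J F ⊆ thick J' F' := fun z hz => by
  obtain ⟨w, hw, hd⟩ := hz; exact ⟨w, hF hw, hJ hd⟩

lemma IsCosetGe.thick_eq {J : Submodule ℚ L} {F : Set L} (h : IsCosetGe J F) :
    thick J F = F := by
  obtain ⟨v, W, hJW, rfl⟩ := h
  ext z
  refine ⟨fun hz => ?_, fun hz => subset_thick hz⟩
  obtain ⟨w, hw, hd⟩ := hz
  have : (z - w) + (w - v) ∈ W := W.add_mem (hJW hd) hw
  simpa using this

lemma IsCosetGe.thick {J J' : Submodule ℚ L} {F : Set L} (h : IsCosetGe J' F) :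
    IsCosetGe J (thick J F) := by
  obtain ⟨v, W, hJW, rfl⟩ := h
  refine ⟨v, W ⊔ J, le_sup_right, ?_⟩
  ext z
  constructor
  · rintro ⟨w, hw, hd⟩
    have : (z - w) + (w - v) ∈ W ⊔ J :=
      Submodule.add_mem _ (Submodule.mem_sup_right hd) (Submodule.mem_sup_left hw)
    simpa using this
  · intro hz
    obtain ⟨a, ha, b, hb, hab⟩ := Submodule.mem_sup.mp hz
    refine ⟨z - b, ?_, by simpa using hb⟩
    show z - b - v ∈ W
    have : z - v - b = a := by rw [← hab]; abel
    rw [sub_right_comm, this]; exact ha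

lemma coset_iInter {J : Submodule ℚ L} {κ : Sort*} {F : κ → Set L}
    (h : ∀ k, IsCosetGe J (F k)) (hne : (⋂ k, F k).Nonempty) :
    IsCosetGe J (⋂ k, F k) := by
  simp only [IsCosetGe] at h
  choose v W hJW hEq using h
  obtain ⟨p, hp⟩ := hne
  refine ⟨p, ⨅ k, W k, le_iInf hJW, ?_⟩
  ext z
  simp only [Set.mem_iInter, Set.mem_setOf_eq, Submodule.mem_iInf]
  constructor
  · intro hz k
    have h1 : z - v k ∈ W k := by have := hz k; rw [hEq k] at this; exact this
    have h2 : p - v k ∈ W k := by have := Set.mem_iInter.mp hp k; rw [hEq k] at this; exact this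
    have : (z - v k) - (p - v k) ∈ W k := (W k).sub_mem h1 h2
    simpa using this
  · intro hz k
    rw [hEq k]
    have h2 : p - v k ∈ W k := by have := Set.mem_iInter.mp hp k; rw [hEq k] at this; exact this
    have : (z - p) + (p - v k) ∈ W k := (W k).add_mem (hz k) h2
    simpa using this

lemma coset_inter {J : Submodule ℚ L} {F G : Set L}
    (hF : IsCosetGe J F) (hG : IsCosetGe J G) (hne : (F ∩ G).Nonempty) :
    IsCosetGe J (F ∩ G) := by
  obtain ⟨v, W, hJW, rfl⟩ := hF
  obtain ⟨u, V, hJV, rfl⟩ := hG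
  obtain ⟨p, hp1, hp2⟩ := hne
  refine ⟨p, W ⊓ V, le_inf hJW hJV, ?_⟩
  ext z
  simp only [Set.mem_inter_iff, Set.mem_setOf_eq, Submodule.mem_inf]
  constructor
  · rintro ⟨h1, h2⟩
    exact ⟨by simpa using W.sub_mem h1 hp1, by simpa using V.sub_mem h2 hp2⟩
  · rintro ⟨h1, h2⟩
    exact ⟨by simpa using W.add_mem h1 hp1, by simpa using V.add_mem h2 hp2⟩

lemma coset_dir_le {v u : L} {W V : Submodule ℚ L}
    (h : {z : L | z - v ∈ W} ⊆ {z : L | z - u ∈ V}) : W ≤ V := by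
  intro w hw
  have h1 : v - u ∈ V := h (by simp)
  have h2 : v + w - u ∈ V := h (by simpa using hw)
  have : (v + w - u) - (v - u) ∈ V := V.sub_mem h2 h1
  simpa using this

lemma exists_min_coset {J : Submodule ℚ L} [FiniteDimensional ℚ (L ⧸ J)]
    {κ : Type*} [Nonempty κ] (F : κ → Set L)
    (hF : ∀ k, IsCosetGe J (F k))
    (hdir : ∀ i j, ∃ k, F k ⊆ F i ∧ F k ⊆ F j) :
    ∃ k0, ∀ k, F k0 ⊆ F k := by
  simp only [IsCosetGe] at hF
  choose v W hJW hEq using hF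
  set π := J.mkQ with hπ
  set n : κ → ℕ := fun k => Module.finrank ℚ ((W k).map π) with hn
  obtain ⟨k0, hk0⟩ : ∃ k0, ∀ k, n k0 ≤ n k := by
    have hr : (Set.range n).Nonempty := ⟨n (Classical.arbitrary κ), Set.mem_range_self _⟩
    obtain ⟨k0, hk0⟩ := Nat.sInf_mem hr
    exact ⟨k0, fun k => hk0 ▸ Nat.sInf_le (Set.mem_range_self k)⟩
  refine ⟨k0, fun k => ?_⟩
  obtain ⟨j, hj0, hjk⟩ := hdir k0 k
  have hWle : W j ≤ W k0 := coset_dir_le (by rw [← hEq j, ← hEq k0]; exact hj0)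
  have hmap : (W j).map π = (W k0).map π :=
    Submodule.eq_of_le_of_finrank_le (Submodule.map_mono hWle) (hk0 j)
  have hcm : ∀ i, Submodule.comap π ((W i).map π) = W i := by
    intro i
    rw [Submodule.comap_map_eq, Submodule.ker_mkQ]
    exact sup_eq_left.mpr (hJW i)
  have hWeq : W j = W k0 := by rw [← hcm j, ← hcm k0, hmap]
  have hsub : F k0 ⊆ F j := by
    have hv : v j ∈ F k0 := hj0 (by rw [hEq j]; simp)
    rw [hEq k0] at hv
    intro z hz
    rw [hEq k0] at hz
    rw [hEq j]
    show z - v j ∈ W j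
    rw [hWeq]
    have : (z - v k0) - (v j - v k0) ∈ W k0 := (W k0).sub_mem hz hv
    simpa using this
  exact fun z hz => hjk (hsub hz)

end Aux

section Aux2
variable {ι L : Type*} [LieRing L] [LieAlgebra ℚ L]

def Cset (I : ι → LieIdeal ℚ L) (S T : Submodule ℚ L) (x : L) (α : ι) : Set L :=
  {z | z ∈ S ⊔ (I α : Submodule ℚ L) ∧ x - z ∈ T ⊔ (I α : Submodule ℚ L)}

def Eset (I : ι → LieIdeal ℚ L) (S T : Submodule ℚ L) (x : L) (α : ι) : Set L :=
  ⋂ γ : {γ // I γ ≤ I α}, thick (I α) (Cset I S T x γ)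

variable {I : ι → LieIdeal ℚ L} {S T : Submodule ℚ L} {x : L}

lemma idealle {α β : ι} (h : I β ≤ I α) : (I β : Submodule ℚ L) ≤ (I α : Submodule ℚ L) :=
  (LieSubmodule.toSubmodule_le_toSubmodule _ _).mpr h

lemma Cset_coset (hx : ∀ α, ∃ s ∈ S ⊔ T, x - s ∈ (I α : Submodule ℚ L)) (α : ι) :
    IsCosetGe (I α : Submodule ℚ L) (Cset I S T x α) := by
  obtain ⟨s', hs', he⟩ := hx α
  obtain ⟨s, hs, t, ht, hst⟩ := Submodule.mem_sup.mp hs'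
  refine ⟨x - t, (S ⊔ (I α : Submodule ℚ L)) ⊓ (T ⊔ (I α : Submodule ℚ L)),
    le_inf le_sup_right le_sup_right, ?_⟩
  have hv1 : x - t ∈ S ⊔ (I α : Submodule ℚ L) := by
    have : x - t = s + (x - s') := by rw [← hst]; abel
    rw [this]
    exact Submodule.add_mem _ (Submodule.mem_sup_left hs) (Submodule.mem_sup_right he)
  have hv2 : x - (x - t) ∈ T ⊔ (I α : Submodule ℚ L) := by
    simpa using Submodule.mem_sup_left ht
  ext z
  simp only [Cset, Set.mem_setOf_eq]
  constructor
  · rintro ⟨h1, h2⟩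
    refine Submodule.mem_inf.mpr ⟨Submodule.sub_mem _ h1 hv1, ?_⟩
    have e : z - (x - t) = (x - (x - t)) - (x - z) := by abel
    rw [e]; exact Submodule.sub_mem _ hv2 h2
  · intro hz
    obtain ⟨h1, h2⟩ := Submodule.mem_inf.mp hz
    constructor
    · have e : z = (z - (x - t)) + (x - t) := by abel
      rw [e]; exact Submodule.add_mem _ h1 hv1
    · have e : x - z = (x - (x - t)) - (z - (x - t)) := by abel
      rw [e]; exact Submodule.sub_mem _ hv2 h2
lemma Cset_mono {α β : ι} (h : I β ≤ I α) : Cset I S T x β ⊆ Cset I S T x α :=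
  fun _ hz => ⟨sup_le_sup_left (idealle h) S hz.1, sup_le_sup_left (idealle h) T hz.2⟩

lemma Eset_coset (hdir : ∀ α β, ∃ γ, I γ ≤ I α ⊓ I β)
    (hfd : ∀ α, FiniteDimensional ℚ (L ⧸ I α))
    (hx : ∀ α, ∃ s ∈ S ⊔ T, x - s ∈ (I α : Submodule ℚ L)) (α : ι) : IsCosetGe (I α : Submodule ℚ L) (Eset I S T x α) := by
  haveI : FiniteDimensional ℚ (L ⧸ (I α : Submodule ℚ L)) := hfd α
  haveI : Nonempty {γ // I γ ≤ I α} := ⟨⟨α, le_rfl⟩⟩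
  set F : {γ // I γ ≤ I α} → Set L :=
    fun γ => thick (I α : Submodule ℚ L) (Cset I S T x γ.1) with hF
  have hco : ∀ k, IsCosetGe (I α : Submodule ℚ L) (F k) :=
    fun k => (Cset_coset hx k.1).thick
  have hd : ∀ i j : {γ // I γ ≤ I α}, ∃ k, F k ⊆ F i ∧ F k ⊆ F j := by
    rintro i j
    obtain ⟨γ, hγ⟩ := hdir i.1 j.1
    refine ⟨⟨γ, le_trans (le_trans hγ inf_le_left) i.2⟩, ?_, ?_⟩
    · exact thick_mono le_rfl (Cset_mono (le_trans hγ inf_le_left))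
    · exact thick_mono le_rfl (Cset_mono (le_trans hγ inf_le_right))
  obtain ⟨k0, hk0⟩ := exists_min_coset F hco hd
  have hne : (⋂ k, F k).Nonempty := by
    obtain ⟨p, hp⟩ := (hco k0).nonempty
    exact ⟨p, Set.mem_iInter.mpr fun k => hk0 k hp⟩
  exact coset_iInter hco hne

lemma Eset_subset_C (hx : ∀ α, ∃ s ∈ S ⊔ T, x - s ∈ (I α : Submodule ℚ L)) (α : ι) : Eset I S T x α ⊆ Cset I S T x α := by
  have h := Set.iInter_subset
    (fun γ : {γ // I γ ≤ I α} => thick (I α : Submodule ℚ L) (Cset I S T x γ.1)) ⟨α, le_rfl⟩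
  rw [(Cset_coset hx α).thick_eq] at h
  exact h

lemma Eset_mono (hdir : ∀ α β, ∃ γ, I γ ≤ I α ⊓ I β) {α β : ι} (h : I β ≤ I α) : Eset I S T x β ⊆ Eset I S T x α := by
  intro z hz
  refine Set.mem_iInter.mpr ?_
  rintro ⟨γ, hγ⟩
  obtain ⟨δ, hδ⟩ := hdir γ β
  have h1 : z ∈ thick (I β : Submodule ℚ L) (Cset I S T x δ) :=
    Set.mem_iInter.mp hz ⟨δ, le_trans hδ inf_le_right⟩
  exact thick_mono (idealle h) (Cset_mono (le_trans hδ inf_le_left)) h1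

lemma Eset_surj (hdir : ∀ α β, ∃ γ, I γ ≤ I α ⊓ I β)
    (hfd : ∀ α, FiniteDimensional ℚ (L ⧸ I α))
    (hx : ∀ α, ∃ s ∈ S ⊔ T, x - s ∈ (I α : Submodule ℚ L)) {α β : ι} (h : I β ≤ I α) {z : L} (hz : z ∈ Eset I S T x α) :
    ∃ w ∈ Eset I S T x β, z - w ∈ (I α : Submodule ℚ L) := by
  haveI : FiniteDimensional ℚ (L ⧸ (I β : Submodule ℚ L)) := hfd β
  haveI : Nonempty {γ // I γ ≤ I β} := ⟨⟨β, le_rfl⟩⟩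
  set G : {γ // I γ ≤ I β} → Set L := fun γ =>
    thick (I β : Submodule ℚ L) (Cset I S T x γ.1) ∩ {u | u - z ∈ (I α : Submodule ℚ L)}
    with hG
  have hco : ∀ k, IsCosetGe (I β : Submodule ℚ L) (G k) := by
    intro k
    refine coset_inter ((Cset_coset hx k.1).thick) ⟨z, _, idealle h, rfl⟩ ?_
    have h1 : z ∈ thick (I α : Submodule ℚ L) (Cset I S T x k.1) :=
      Set.mem_iInter.mp hz ⟨k.1, le_trans k.2 h⟩
    obtain ⟨c, hc, hd'⟩ := h1
    exact ⟨c, subset_thick hc, by simpa using Submodule.neg_mem _ hd'⟩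
  have hd : ∀ i j : {γ // I γ ≤ I β}, ∃ k, G k ⊆ G i ∧ G k ⊆ G j := by
    rintro i j
    obtain ⟨γ, hγ⟩ := hdir i.1 j.1
    refine ⟨⟨γ, le_trans (le_trans hγ inf_le_left) i.2⟩, ?_, ?_⟩
    · exact Set.inter_subset_inter_left _ (thick_mono le_rfl (Cset_mono (le_trans hγ inf_le_left)))
    · exact Set.inter_subset_inter_left _ (thick_mono le_rfl (Cset_mono (le_trans hγ inf_le_right)))
  obtain ⟨k0, hk0⟩ := exists_min_coset G hco hd
  obtain ⟨w, hw⟩ := (hco k0).nonempty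
  refine ⟨w, ?_, ?_⟩
  · exact Set.mem_iInter.mpr fun k => (hk0 k hw).1
  · have := (hw : w ∈ G k0).2
    simpa using Submodule.neg_mem _ this
end Aux2

section Aux3
variable {ι L : Type*} [LieRing L] [LieAlgebra ℚ L]

def Good (I : ι → LieIdeal ℚ L) (S T : Submodule ℚ L) (x : L) (F : ι → Set L) : Prop :=
  (∀ α, IsCosetGe (I α : Submodule ℚ L) (F α) ∧ F α ⊆ Eset I S T x α) ∧
  (∀ α β, I β ≤ I α → F β ⊆ F α ∧ F α ⊆ thick (I α : Submodule ℚ L) (F β))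

def sect (A : Set (ι × L)) : ι → Set L := fun α => {z | (α, z) ∈ A}

lemma exists_coherent {I : ι → LieIdeal ℚ L} {S T : Submodule ℚ L} {x : L}
    (hdir : ∀ α β, ∃ γ, I γ ≤ I α ⊓ I β)
    (hfd : ∀ α, FiniteDimensional ℚ (L ⧸ I α))
    (hx : ∀ α, ∃ s ∈ S ⊔ T, x - s ∈ (I α : Submodule ℚ L)) :
    ∃ y : ι → L, (∀ α, y α ∈ Cset I S T x α) ∧
      ∀ α β, I β ≤ I α → y β - y α ∈ (I α : Submodule ℚ L) := by
  classical
  -- the set of "good" families, encoded as subsets of ι × L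
  set 𝒮 : Set (Set (ι × L)) := {A | Good I S T x (sect A)} with h𝒮
  -- E itself is good
  have hEgood : Good I S T x (Eset I S T x) := by
    refine ⟨fun α => ⟨Eset_coset hdir hfd hx α, subset_rfl⟩, fun α β h => ⟨Eset_mono hdir h, ?_⟩⟩
    intro z hz
    obtain ⟨w, hw, hd⟩ := Eset_surj hdir hfd hx h hz
    exact ⟨w, hw, hd⟩
  -- Zorn's lemma: a minimal good family exists
  obtain ⟨m, hm, hmin⟩ : ∃ m ∈ 𝒮, ∀ A ∈ 𝒮, A ⊆ m → A = m := by
    have key : ∀ c ⊆ 𝒮, IsChain (· ⊆ ·) c → ∃ lb ∈ 𝒮, ∀ A ∈ c, lb ⊆ A := ?_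
    · obtain ⟨m, hm⟩ := zorn_superset 𝒮 key
      exact ⟨m, hm.1, fun A hA hsub => subset_antisymm hsub (hm.2 hA hsub)⟩
    intro c hc𝒮 hchain
    rcases c.eq_empty_or_nonempty with rfl | hcne
    · exact ⟨{p | p.2 ∈ Eset I S T x p.1}, hEgood, by simp⟩
    haveI : Nonempty c := hcne.to_subtype
    refine ⟨⋂₀ c, ?_, fun A hA => Set.sInter_subset_of_mem hA⟩
    have hsect : ∀ α, sect (⋂₀ c) α = ⋂ A : c, sect A.1 α := by
      intro α; ext z
      simp [sect, Set.mem_sInter, Set.mem_iInter, Subtype.forall]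
    have hGk : ∀ A : c, Good I S T x (sect A.1) := fun A => hc𝒮 A.2
    have hdirc : ∀ (β : ι) (i j : c), ∃ k : c, sect k.1 β ⊆ sect i.1 β ∧ sect k.1 β ⊆ sect j.1 β := by
      intro β i j
      rcases eq_or_ne i.1 j.1 with he | hne
      · exact ⟨i, subset_rfl, by rw [he]⟩
      rcases hchain i.2 j.2 hne with hle | hle
      · exact ⟨i, subset_rfl, fun z hz => hle hz⟩
      · exact ⟨j, fun z hz => hle hz, subset_rfl⟩
    constructor
    · intro α
      haveI : FiniteDimensional ℚ (L ⧸ (I α : Submodule ℚ L)) := hfd α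
      have hco : ∀ A : c, IsCosetGe (I α : Submodule ℚ L) (sect A.1 α) :=
        fun A => ((hGk A).1 α).1
      obtain ⟨k0, hk0⟩ := exists_min_coset (fun A : c => sect A.1 α) hco (hdirc α)
      have hne : (⋂ A : c, sect A.1 α).Nonempty := by
        obtain ⟨p, hp⟩ := (hco k0).nonempty
        exact ⟨p, Set.mem_iInter.mpr fun k => hk0 k hp⟩
      refine ⟨by rw [hsect α]; exact coset_iInter hco hne, ?_⟩
      rw [hsect α]
      exact subset_trans (Set.iInter_subset _ (Classical.arbitrary c))
        (((hGk _).1 α).2)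
    · intro α β h
      constructor
      · rw [hsect α, hsect β]
        exact Set.iInter_mono fun A => ((hGk A).2 α β h).1
      · -- surjectivity for the intersection
        intro z hz
        haveI : FiniteDimensional ℚ (L ⧸ (I β : Submodule ℚ L)) := hfd β
        rw [hsect α] at hz
        set H : c → Set L :=
          fun A => sect A.1 β ∩ {u | u - z ∈ (I α : Submodule ℚ L)} with hH
        have hco : ∀ A : c, IsCosetGe (I β : Submodule ℚ L) (H A) := by
          intro A
          refine coset_inter ((hGk A).1 β).1 ⟨z, _, idealle h, rfl⟩ ?_
          have h1 : z ∈ thick (I α : Submodule ℚ L) (sect A.1 β) :=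
            ((hGk A).2 α β h).2 (Set.mem_iInter.mp hz A)
          obtain ⟨w, hw, hd⟩ := h1
          exact ⟨w, hw, by simpa using Submodule.neg_mem _ hd⟩
        have hdH : ∀ i j : c, ∃ k : c, H k ⊆ H i ∧ H k ⊆ H j := by
          intro i j
          obtain ⟨k, h1, h2⟩ := hdirc β i j
          exact ⟨k, Set.inter_subset_inter_left _ h1, Set.inter_subset_inter_left _ h2⟩
        obtain ⟨k0, hk0⟩ := exists_min_coset H hco hdH
        obtain ⟨w, hw⟩ := (hco k0).nonempty
        refine ⟨w, ?_, ?_⟩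
        · rw [hsect β]; exact Set.mem_iInter.mpr fun k => (hk0 k hw).1
        · simpa using Submodule.neg_mem _ (hw.2 : w - z ∈ (I α : Submodule ℚ L))
  set M : ι → Set L := sect m with hM
  have hGm : Good I S T x M := hm
  -- key claim: each `M α` is contained in a single coset of `I α`
  have hclaim : ∀ α, ∀ z ∈ M α, ∀ w ∈ M α, w - z ∈ (I α : Submodule ℚ L) := by
    by_contra hcon
    push_neg at hcon
    obtain ⟨α0, z0, hz0, w0, hw0, hbad⟩ := hcon
    -- the shrunken family
    set N : ι → Set L := fun γ => M γ ∩ {u | u - z0 ∈ (I α0 : Submodule ℚ L)} with hN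
    have hNco : ∀ γ, I γ ≤ I α0 → IsCosetGe (I γ : Submodule ℚ L) (N γ) := by
      intro γ hγ
      refine coset_inter ((hGm.1 γ).1) ⟨z0, _, idealle hγ, rfl⟩ ?_
      obtain ⟨w, hw, hd⟩ := (hGm.2 α0 γ hγ).2 hz0
      exact ⟨w, hw, by simpa using Submodule.neg_mem _ hd⟩
    have hNmono : ∀ {γ δ : ι}, I δ ≤ I γ → N δ ⊆ N γ :=
      fun hδγ => Set.inter_subset_inter_left _ (hGm.2 _ _ hδγ).1
    set M' : ι → Set L := fun α =>
      ⋂ γ : {γ // I γ ≤ I α ⊓ I α0}, thick (I α : Submodule ℚ L) (N γ.1) with hM'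
    have hidx : ∀ α, ∃ γ, I γ ≤ I α ⊓ I α0 := fun α => hdir α α0
    have hM'subM : ∀ α, M' α ⊆ M α := by
      intro α
      obtain ⟨γ, hγ⟩ := hidx α
      refine subset_trans (Set.iInter_subset _ ⟨γ, hγ⟩) ?_
      refine subset_trans (thick_mono le_rfl (Set.inter_subset_left.trans
        (hGm.2 α γ (le_trans hγ inf_le_left)).1)) ?_
      rw [(hGm.1 α).1.thick_eq]
    have hM'good : Good I S T x M' := by
      constructor
      · intro α
        haveI : FiniteDimensional ℚ (L ⧸ (I α : Submodule ℚ L)) := hfd α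
        haveI : Nonempty {γ // I γ ≤ I α ⊓ I α0} := by
          obtain ⟨γ, hγ⟩ := hidx α; exact ⟨⟨γ, hγ⟩⟩
        have hco : ∀ k : {γ // I γ ≤ I α ⊓ I α0},
            IsCosetGe (I α : Submodule ℚ L) (thick (I α : Submodule ℚ L) (N k.1)) :=
          fun k => (hNco k.1 (le_trans k.2 inf_le_right)).thick
        have hd : ∀ i j : {γ // I γ ≤ I α ⊓ I α0}, ∃ k : {γ // I γ ≤ I α ⊓ I α0},
            thick (I α : Submodule ℚ L) (N k.1) ⊆ thick (I α : Submodule ℚ L) (N i.1) ∧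
            thick (I α : Submodule ℚ L) (N k.1) ⊆ thick (I α : Submodule ℚ L) (N j.1) := by
          intro i j
          obtain ⟨γ, hγ⟩ := hdir i.1 j.1
          refine ⟨⟨γ, le_trans (le_trans hγ inf_le_left) i.2⟩, ?_, ?_⟩
          · exact thick_mono le_rfl (hNmono (le_trans hγ inf_le_left))
          · exact thick_mono le_rfl (hNmono (le_trans hγ inf_le_right))
        obtain ⟨k0, hk0⟩ := exists_min_coset _ hco hd
        have hne : (M' α).Nonempty := by
          obtain ⟨p, hp⟩ := (hco k0).nonempty
          exact ⟨p, Set.mem_iInter.mpr fun k => hk0 k hp⟩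
        exact ⟨coset_iInter hco hne, subset_trans (hM'subM α) ((hGm.1 α).2)⟩
      · intro α β h
        constructor
        · intro z hz
          refine Set.mem_iInter.mpr ?_
          rintro ⟨γ, hγ⟩
          obtain ⟨δ, hδ⟩ := hdir γ β
          have hδ0 : I δ ≤ I β ⊓ I α0 :=
            le_inf (le_trans hδ inf_le_right)
              (le_trans (le_trans hδ inf_le_left) (le_trans hγ inf_le_right))
          have h1 : z ∈ thick (I β : Submodule ℚ L) (N δ) := Set.mem_iInter.mp hz ⟨δ, hδ0⟩
          exact thick_mono (idealle h) (hNmono (le_trans hδ inf_le_left)) h1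
        · intro z hz
          haveI : FiniteDimensional ℚ (L ⧸ (I β : Submodule ℚ L)) := hfd β
          haveI : Nonempty {γ // I γ ≤ I β ⊓ I α0} := by
            obtain ⟨γ, hγ⟩ := hidx β; exact ⟨⟨γ, hγ⟩⟩
          set H : {γ // I γ ≤ I β ⊓ I α0} → Set L := fun γ =>
            thick (I β : Submodule ℚ L) (N γ.1) ∩ {u | u - z ∈ (I α : Submodule ℚ L)} with hH
          have hco : ∀ k, IsCosetGe (I β : Submodule ℚ L) (H k) := by
            intro k
            have hk0' : I k.1 ≤ I α ⊓ I α0 :=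
              le_inf (le_trans (le_trans k.2 inf_le_left) h) (le_trans k.2 inf_le_right)
            refine coset_inter ((hNco k.1 (le_trans k.2 inf_le_right)).thick)
              ⟨z, _, idealle h, rfl⟩ ?_
            have h1 : z ∈ thick (I α : Submodule ℚ L) (N k.1) := Set.mem_iInter.mp hz ⟨k.1, hk0'⟩
            obtain ⟨w, hw, hd⟩ := h1
            exact ⟨w, subset_thick hw, by simpa using Submodule.neg_mem _ hd⟩
          have hdH : ∀ i j, ∃ k, H k ⊆ H i ∧ H k ⊆ H j := by
            intro i j
            obtain ⟨γ, hγ⟩ := hdir i.1 j.1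
            refine ⟨⟨γ, le_trans (le_trans hγ inf_le_left) i.2⟩, ?_, ?_⟩
            · exact Set.inter_subset_inter_left _
                (thick_mono le_rfl (hNmono (le_trans hγ inf_le_left)))
            · exact Set.inter_subset_inter_left _
                (thick_mono le_rfl (hNmono (le_trans hγ inf_le_right)))
          obtain ⟨k0, hk0⟩ := exists_min_coset H hco hdH
          obtain ⟨w, hw⟩ := (hco k0).nonempty
          refine ⟨w, Set.mem_iInter.mpr fun k => (hk0 k hw).1, ?_⟩
          simpa using Submodule.neg_mem _ (hw.2 : w - z ∈ (I α : Submodule ℚ L))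
      -- end Good M'
    -- minimality forces M' = M, contradiction
    have hgr : {p : ι × L | p.2 ∈ M' p.1} = m := by
      apply hmin
      · exact hM'good
      · exact fun p hp => hM'subM p.1 hp
    have hw0' : w0 ∈ M' α0 := by
      have h1 : ((α0, w0) : ι × L) ∈ m := hw0
      rw [← hgr] at h1
      exact h1
    obtain ⟨γ, hγ⟩ := hidx α0
    have h2 : w0 ∈ thick (I α0 : Submodule ℚ L) (N γ) := Set.mem_iInter.mp hw0' ⟨γ, hγ⟩
    obtain ⟨w, hw, hd⟩ := h2
    have h3 : w - z0 ∈ (I α0 : Submodule ℚ L) := hw.2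
    have : w0 - z0 ∈ (I α0 : Submodule ℚ L) := by
      have := Submodule.add_mem _ hd h3
      simpa using this
    exact hbad this
  -- extract a coherent family
  have hne : ∀ α, ∃ z, z ∈ M α := fun α => ((hGm.1 α).1).nonempty
  choose y hy using hne
  refine ⟨y, fun α => Eset_subset_C hx α ((hGm.1 α).2 (hy α)), fun α β h => ?_⟩
  exact hclaim α (y α) (hy α) (y β) ((hGm.2 α β h).1 (hy β))
end Aux3

/-- In a complete enriched Lie algebra, the sum of two closed
subspaces is closed. -/
theorem stmt2 {ι L : Type*} [LieRing L] [LieAlgebra ℚ L]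
    (I : ι → LieIdeal ℚ L) (hE : IsEnriched I) (hC : IsCompleteWrt I)
    (S T : Submodule ℚ L) (hS : encl I S = S) (hT : encl I T = T) :
    encl I (S ⊔ T) = S ⊔ T := by
  have hdir : ∀ α β, ∃ γ, I γ ≤ I α ⊓ I β := hE.1
  have hfd : ∀ α, FiniteDimensional ℚ (L ⧸ I α) := hE.2.1
  apply le_antisymm
  · intro x hx'
    have hx : ∀ α, ∃ s ∈ S ⊔ T, x - s ∈ (I α : Submodule ℚ L) := hx'
    obtain ⟨y, hyC, hcoh⟩ := exists_coherent hdir hfd hx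
    obtain ⟨x', hx'α⟩ := hC y hcoh
    have hx'S : x' ∈ S := by
      rw [← hS]
      intro α
      obtain ⟨s, hs, i, hi, hsi⟩ := Submodule.mem_sup.mp (hyC α).1
      refine ⟨s, hs, ?_⟩
      have : x' - s = (x' - y α) + i := by rw [← hsi]; abel
      rw [this]
      exact Submodule.add_mem _ (hx'α α) hi
    have hxT : x - x' ∈ T := by
      rw [← hT]
      intro α
      obtain ⟨t, ht, i, hi, hti⟩ := Submodule.mem_sup.mp (hyC α).2
      refine ⟨t, ht, ?_⟩
      have h2 : i = (x - y α) - t := by rw [← hti]; abel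
      have : (x - x') - t = i - (x' - y α) := by rw [h2]; abel
      rw [this]
      exact Submodule.sub_mem _ hi (hx'α α)
    have : x = x' + (x - x') := by abel
    rw [this]
    exact Submodule.add_mem _ (Submodule.mem_sup_left hx'S) (Submodule.mem_sup_right hxT)
  · intro z hz α
    exact ⟨z, hz, by simp⟩
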